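/- Let q ∈ (0,1), J ≥ 1, and let μ₁, …, μ_J be strictly negative real numbers. Let c be the unique real number such that Σ_{i=1}^J Φ(μ_i/2 + c/μ_i) = Jq, and set w_i = Φ(μ_i/2 + c/μ_i)/q. Then 0 ≤ w_i ≤ 1/q, Σ_{i=1}^J w_i = J, and the vector (w₁, …, w_J) maximizes the average-power objective Σ_{i=1}^J Φ(Φ⁻¹(q v_i) − μ_i) over all vectors v ∈ [0, 1/q]^J with Σ_{i=1}^J v_i = J. -/

import Mathlib

/-- The standard normal cumulative distribution function. -/
noncomputable def Phi (x : ℝ) : ℝ :=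
  ∫ t in Set.Iic x, (Real.sqrt (2 * Real.pi))⁻¹ * Real.exp (-t ^ 2 / 2)

/-- The inverse of the standard normal CDF, mapping (0,1) onto ℝ. -/
noncomputable def PhiInv : ℝ → ℝ := Function.invFun Phi

/-- The power `Φ(Φ⁻¹(qv) − μ)` of the one-sided Gaussian test at level `q v`,
extended by continuity: it equals `0` at `v = 0` and `1` at `v = 1/q`. -/
noncomputable def oneSidedPower (q μ v : ℝ) : ℝ :=
  if v = 0 then 0 else if v = 1 / q then 1 else Phi (PhiInv (q * v) - μ)

open MeasureTheory Set Real

noncomputable def gpdf (t : ℝ) : ℝ := (Real.sqrt (2 * Real.pi))⁻¹ * Real.exp (-t ^ 2 / 2)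

lemma gpdf_eq : gpdf = ProbabilityTheory.gaussianPDFReal 0 1 := by
  funext t
  simp [gpdf, ProbabilityTheory.gaussianPDFReal]

lemma gpdf_pos (t : ℝ) : 0 < gpdf t := by
  rw [gpdf_eq]; exact ProbabilityTheory.gaussianPDFReal_pos _ _ _ one_ne_zero

lemma gpdf_int : Integrable gpdf := by
  rw [gpdf_eq]; exact ProbabilityTheory.integrable_gaussianPDFReal 0 1

lemma gpdf_total : ∫ t, gpdf t = 1 := by
  rw [gpdf_eq]; exact ProbabilityTheory.integral_gaussianPDFReal_eq_one 0 one_ne_zero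

lemma Phi_eq (x : ℝ) : Phi x = ∫ t in Set.Iic x, gpdf t := rfl

lemma gpdf_sub (m t : ℝ) : gpdf (t - m) = Real.exp (m * t - m ^ 2 / 2) * gpdf t := by
  simp only [gpdf]
  rw [mul_comm (Real.exp _), mul_assoc, ← Real.exp_add]
  ring_nf

lemma gpdf_int_sub (m : ℝ) : Integrable (fun t => gpdf (t - m)) :=
  gpdf_int.comp_sub_right m

lemma Phi_shift (x m : ℝ) : Phi (x - m) = ∫ t in Set.Iic x, gpdf (t - m) := by
  rw [Phi_eq]
  have h := (measurePreserving_sub_right volume m).setIntegral_preimage_emb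
    (MeasurableEquiv.subRight m).measurableEmbedding gpdf (Iic (x - m))
  rw [← h]
  congr 1
  ext t
  simp [sub_le_sub_iff_right]

lemma Phi_sub_Phi (a b : ℝ) : Phi b - Phi a = ∫ t in a..b, gpdf t := by
  rw [Phi_eq, Phi_eq]
  exact intervalIntegral.integral_Iic_sub_Iic gpdf_int.integrableOn gpdf_int.integrableOn

lemma Phi_shift_sub (a b m : ℝ) :
    Phi (b - m) - Phi (a - m) = ∫ t in a..b, gpdf (t - m) := by
  rw [Phi_shift, Phi_shift]
  exact intervalIntegral.integral_Iic_sub_Iic (gpdf_int_sub m).integrableOn (gpdf_int_sub m).integrableOn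

lemma Phi_nonneg (x : ℝ) : 0 ≤ Phi x :=
  setIntegral_nonneg measurableSet_Iic (fun t _ => (gpdf_pos t).le)

lemma one_sub_Phi (x : ℝ) : 1 - Phi x = ∫ t in Set.Ioi x, gpdf t := by
  rw [Phi_eq, sub_eq_iff_eq_add', ← gpdf_total]
  exact (intervalIntegral.integral_Iic_add_Ioi gpdf_int.integrableOn gpdf_int.integrableOn).symm

lemma one_sub_Phi_shift (x m : ℝ) : 1 - Phi (x - m) = ∫ t in Set.Ioi x, gpdf (t - m) := by
  rw [Phi_shift, sub_eq_iff_eq_add']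
  have : (1 : ℝ) = ∫ t, gpdf (t - m) := by
    rw [integral_sub_right_eq_self gpdf m, gpdf_total]
  rw [this]
  exact (intervalIntegral.integral_Iic_add_Ioi (gpdf_int_sub m).integrableOn (gpdf_int_sub m).integrableOn).symm

lemma Phi_strictMono : StrictMono Phi := by
  intro a b hab
  have h : 0 < ∫ t in a..b, gpdf t := by
    apply intervalIntegral.intervalIntegral_pos_of_pos_on gpdf_int.intervalIntegrable
    · exact fun t _ => gpdf_pos t
    · exact hab
  have := Phi_sub_Phi a b
  linarith

lemma Phi_lt_one (x : ℝ) : Phi x < 1 := by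
  have h : 0 < ∫ t in Set.Ioi x, gpdf t := by
    rw [setIntegral_pos_iff_support_of_nonneg_ae
      (ae_of_all _ (fun t => (gpdf_pos t).le)) gpdf_int.integrableOn]
    have : Function.support gpdf = Set.univ := by
      ext t; simp [Function.mem_support, (gpdf_pos t).ne']
    rw [this, Set.univ_inter]
    simp [Real.volume_Ioi]
  have := one_sub_Phi x
  linarith

lemma Phi_pos (x : ℝ) : 0 < Phi x := by
  have h : Phi (x - 1) < Phi x := Phi_strictMono (by linarith)
  have h2 : 0 ≤ Phi (x - 1) := Phi_nonneg _
  linarith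

lemma Phi_continuous : Continuous Phi := by
  have C0 : (0:ℝ) ≤ (Real.sqrt (2 * Real.pi))⁻¹ := by positivity
  have hlip : LipschitzWith (Real.toNNReal ((Real.sqrt (2 * Real.pi))⁻¹)) Phi := by
    apply LipschitzWith.of_dist_le_mul
    intro a b
    rw [Real.dist_eq, Real.dist_eq, Phi_sub_Phi b a]
    rw [← Real.norm_eq_abs (∫ t in b..a, gpdf t)]
    calc ‖∫ t in b..a, gpdf t‖ ≤ (Real.sqrt (2 * Real.pi))⁻¹ * |a - b| := by
          apply intervalIntegral.norm_integral_le_of_norm_le_const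
          intro t _
          rw [Real.norm_eq_abs, abs_of_pos (gpdf_pos t), gpdf]
          nlinarith [Real.exp_le_one_iff.2 (by nlinarith [sq_nonneg t] : -t^2/2 ≤ 0),
            Real.exp_pos (-t^2/2)]
      _ = ↑(Real.toNNReal ((Real.sqrt (2 * Real.pi))⁻¹)) * |a - b| := by
          rw [Real.coe_toNNReal _ C0]
  exact hlip.continuous

lemma Phi_tendsto_atTop : Filter.Tendsto Phi Filter.atTop (nhds 1) := by
  have key : ∀ x : ℝ, 2 ≤ x → 1 - Phi x ≤ (Real.sqrt (2 * Real.pi))⁻¹ * Real.exp (-x) := by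
    intro x hx
    rw [one_sub_Phi]
    have hint : IntegrableOn (fun t => (Real.sqrt (2 * Real.pi))⁻¹ * Real.exp (-t))
        (Set.Ioi x) := by
      simpa [IntegrableOn] using ((exp_neg_integrableOn_Ioi x one_pos).const_mul ((Real.sqrt (2 * Real.pi))⁻¹))
    have heq : ∫ t in Set.Ioi x, (Real.sqrt (2 * Real.pi))⁻¹ * Real.exp (-t) =
        (Real.sqrt (2 * Real.pi))⁻¹ * Real.exp (-x) := by
      rw [integral_const_mul, integral_exp_neg_Ioi]
    rw [← heq]
    apply setIntegral_mono_on gpdf_int.integrableOn hint measurableSet_Ioi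
    intro t ht
    have ht2 : (2:ℝ) ≤ t := le_trans hx (le_of_lt ht)
    have hee : Real.exp (-t^2/2) ≤ Real.exp (-t) := by
      apply Real.exp_le_exp.2; nlinarith
    rw [gpdf]
    have := Real.sqrt_nonneg (2 * Real.pi)
    gcongr
  have h1 : Filter.Tendsto (fun x : ℝ => 1 - (Real.sqrt (2 * Real.pi))⁻¹ * Real.exp (-x))
      Filter.atTop (nhds 1) := by
    have : Filter.Tendsto (fun x : ℝ => (Real.sqrt (2 * Real.pi))⁻¹ * Real.exp (-x))
        Filter.atTop (nhds 0) := by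
      simpa using (Real.tendsto_exp_neg_atTop_nhds_zero.const_mul ((Real.sqrt (2 * Real.pi))⁻¹))
    simpa using (tendsto_const_nhds.sub this)
  apply tendsto_of_tendsto_of_tendsto_of_le_of_le' h1 tendsto_const_nhds
  · filter_upwards [Filter.eventually_ge_atTop (2:ℝ)] with x hx
    linarith [key x hx]
  · exact Filter.Eventually.of_forall (fun x => (Phi_lt_one x).le)

lemma Phi_tendsto_atBot : Filter.Tendsto Phi Filter.atBot (nhds 0) := by
  have key : ∀ x : ℝ, x ≤ -2 → Phi x ≤ (Real.sqrt (2 * Real.pi))⁻¹ * Real.exp x := by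
    intro x hx
    rw [Phi_eq]
    have heq : ∫ t in Set.Iic x, (Real.sqrt (2 * Real.pi))⁻¹ * Real.exp t =
        (Real.sqrt (2 * Real.pi))⁻¹ * Real.exp x := by
      rw [integral_const_mul, integral_exp_Iic]
    rw [← heq]
    apply setIntegral_mono_on gpdf_int.integrableOn
      ((integrableOn_exp_Iic x).const_mul _) measurableSet_Iic
    intro t ht
    have ht2 : t ≤ -2 := le_trans ht hx
    have hee : Real.exp (-t^2/2) ≤ Real.exp t := by
      apply Real.exp_le_exp.2; nlinarith
    rw [gpdf]
    have := Real.sqrt_nonneg (2 * Real.pi)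
    gcongr
  have h1 : Filter.Tendsto (fun x : ℝ => (Real.sqrt (2 * Real.pi))⁻¹ * Real.exp x)
      Filter.atBot (nhds 0) := by
    simpa using (Real.tendsto_exp_atBot.const_mul ((Real.sqrt (2 * Real.pi))⁻¹))
  apply tendsto_of_tendsto_of_tendsto_of_le_of_le' tendsto_const_nhds h1
  · exact Filter.Eventually.of_forall (fun x => Phi_nonneg x)
  · filter_upwards [Filter.eventually_le_atBot (-2:ℝ)] with x hx
    exact key x hx

lemma Phi_surj (u : ℝ) (hu0 : 0 < u) (hu1 : u < 1) : ∃ x, Phi x = u := by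
  obtain ⟨a, ha⟩ : ∃ a, Phi a < u := by
    have := Phi_tendsto_atBot.eventually_lt_const hu0
    exact this.exists
  obtain ⟨b, hb⟩ : ∃ b, u < Phi b := by
    have := Phi_tendsto_atTop.eventually_const_lt hu1
    exact this.exists
  have hab : a ≤ b := by
    by_contra h
    exact absurd (Phi_strictMono (lt_of_not_ge h)) (by linarith)
  obtain ⟨x, _, hx⟩ := intermediate_value_Icc hab Phi_continuous.continuousOn
    ⟨ha.le, hb.le⟩
  exact ⟨x, hx⟩

lemma Phi_phiInv (u : ℝ) (hu0 : 0 < u) (hu1 : u < 1) : Phi (PhiInv u) = u :=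
  Function.invFun_eq (Phi_surj u hu0 hu1)

lemma PhiInv_Phi (x : ℝ) : PhiInv (Phi x) = x :=
  Function.leftInverse_invFun Phi_strictMono.injective x

lemma gpdf_le_aux {m : ℝ} (hm : m < 0) (c t : ℝ) (h : m / 2 + c / m ≤ t) :
    gpdf (t - m) ≤ Real.exp c * gpdf t := by
  rw [gpdf_sub]
  have hmne : m ≠ 0 := hm.ne
  have hmy : m * (m / 2 + c / m) = m ^ 2 / 2 + c := by field_simp
  have : m * t - m ^ 2 / 2 ≤ c := by nlinarith [mul_le_mul_of_nonpos_left h hm.le]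
  exact mul_le_mul_of_nonneg_right (Real.exp_le_exp.2 this) (gpdf_pos t).le

lemma gpdf_ge_aux {m : ℝ} (hm : m < 0) (c t : ℝ) (h : t ≤ m / 2 + c / m) :
    Real.exp c * gpdf t ≤ gpdf (t - m) := by
  rw [gpdf_sub]
  have hmne : m ≠ 0 := hm.ne
  have hmy : m * (m / 2 + c / m) = m ^ 2 / 2 + c := by field_simp
  have : c ≤ m * t - m ^ 2 / 2 := by nlinarith [mul_le_mul_of_nonpos_left h hm.le]
  exact mul_le_mul_of_nonneg_right (Real.exp_le_exp.2 this) (gpdf_pos t).le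

lemma key_tangent {m : ℝ} (hm : m < 0) (c x : ℝ) :
    Phi (x - m) - Phi ((m / 2 + c / m) - m) ≤
      Real.exp c * (Phi x - Phi (m / 2 + c / m)) := by
  set y := m / 2 + c / m with hy
  rw [Phi_shift_sub y x m, Phi_sub_Phi y x, ← intervalIntegral.integral_const_mul]
  rcases le_total y x with hyx | hxy
  · apply intervalIntegral.integral_mono_on hyx
      (gpdf_int_sub m).intervalIntegrable ((gpdf_int.const_mul _).intervalIntegrable)
    intro t ht
    exact gpdf_le_aux hm c t ht.1
  · rw [intervalIntegral.integral_symm, intervalIntegral.integral_symm x y,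
      neg_le_neg_iff]
    apply intervalIntegral.integral_mono_on hxy
      ((gpdf_int.const_mul _).intervalIntegrable) (gpdf_int_sub m).intervalIntegrable
    intro t ht
    exact gpdf_ge_aux hm c t ht.2

lemma key_zero {m : ℝ} (hm : m < 0) (c : ℝ) :
    Real.exp c * Phi (m / 2 + c / m) ≤ Phi ((m / 2 + c / m) - m) := by
  set y := m / 2 + c / m with hy
  rw [Phi_shift y m, Phi_eq, ← integral_const_mul]
  apply setIntegral_mono_on (gpdf_int.const_mul _).integrableOn
    (gpdf_int_sub m).integrableOn measurableSet_Iic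
  intro t ht
  exact gpdf_ge_aux hm c t ht

lemma key_one {m : ℝ} (hm : m < 0) (c : ℝ) :
    1 - Phi ((m / 2 + c / m) - m) ≤ Real.exp c * (1 - Phi (m / 2 + c / m)) := by
  set y := m / 2 + c / m with hy
  rw [one_sub_Phi_shift y m, one_sub_Phi, ← integral_const_mul]
  apply setIntegral_mono_on (gpdf_int_sub m).integrableOn
    (gpdf_int.const_mul _).integrableOn measurableSet_Ioi
  intro t ht
  exact gpdf_le_aux hm c t (le_of_lt ht)

lemma master {q m c : ℝ} (hq0 : 0 < q) (_hq1 : q < 1) (hm : m < 0) {v : ℝ}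
    (hv : v ∈ Set.Icc (0:ℝ) (1 / q)) :
    oneSidedPower q m v ≤
      Phi ((m / 2 + c / m) - m) + Real.exp c * (q * v - Phi (m / 2 + c / m)) := by
  set y := m / 2 + c / m with hy
  rcases eq_or_ne v 0 with rfl | hv0
  · rw [oneSidedPower, if_pos rfl]
    have := key_zero hm c
    rw [← hy] at this
    nlinarith
  rcases eq_or_ne v (1 / q) with rfl | hv1
  · rw [oneSidedPower, if_neg hv0, if_pos rfl]
    have := key_one hm c
    rw [← hy] at this
    have hq : q * (1 / q) = 1 := by field_simp
    rw [hq]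
    linarith
  · have hvpos : 0 < v := lt_of_le_of_ne hv.1 (Ne.symm hv0)
    have hvlt : v < 1 / q := lt_of_le_of_ne hv.2 hv1
    have hqv0 : 0 < q * v := mul_pos hq0 hvpos
    have hqv1 : q * v < 1 := by
      have := mul_lt_mul_of_pos_left hvlt hq0
      rwa [mul_one_div, div_self hq0.ne'] at this
    rw [oneSidedPower, if_neg hv0, if_neg hv1]
    have hx : Phi (PhiInv (q * v)) = q * v := Phi_phiInv _ hqv0 hqv1
    have := key_tangent hm c (PhiInv (q * v))
    rw [← hy, hx] at this
    linarith

lemma power_at_w {q m c : ℝ} (hq0 : 0 < q) (hm : m < 0) :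
    oneSidedPower q m (Phi (m / 2 + c / m) / q) = Phi ((m / 2 + c / m) - m) := by
  set y := m / 2 + c / m with hy
  have h0 : Phi y / q ≠ 0 := by
    have := Phi_pos y
    positivity
  have h1 : Phi y / q ≠ 1 / q := by
    intro h
    have : Phi y = 1 := by
      field_simp at h
      exact h
    exact absurd this (Phi_lt_one y).ne
  rw [oneSidedPower, if_neg h0, if_neg h1]
  have hq : q * (Phi y / q) = Phi y := by field_simp
  rw [hq, PhiInv_Phi]

/-- Optimality of the Spjøtvoll weights for one-sided Gaussian testing: with all
`μᵢ < 0` and `c` the unique real with `Σᵢ Φ(μᵢ/2 + c/μᵢ) = Jq`, the weights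
`wᵢ = Φ(μᵢ/2 + c/μᵢ)/q` lie in `[0, 1/q]`, sum to `J`, and maximize the average-power
objective `Σᵢ Φ(Φ⁻¹(q vᵢ) − μᵢ)` over all `v ∈ [0, 1/q]^J` with `Σᵢ vᵢ = J`. -/
theorem stmt_19 (q : ℝ) (hq : q ∈ Set.Ioo (0 : ℝ) 1) (J : ℕ) (hJ : 1 ≤ J)
    (μ : Fin J → ℝ) (hμ : ∀ i, μ i < 0)
    (c : ℝ) (hc : ∑ i, Phi (μ i / 2 + c / μ i) = J * q)
    (w : Fin J → ℝ) (hw : ∀ i, w i = Phi (μ i / 2 + c / μ i) / q) :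
    (∀ i, w i ∈ Set.Icc (0 : ℝ) (1 / q)) ∧
    (∑ i, w i = J) ∧
    (∀ v : Fin J → ℝ, (∀ i, v i ∈ Set.Icc (0 : ℝ) (1 / q)) → (∑ i, v i = J) →
      ∑ i, oneSidedPower q (μ i) (v i) ≤ ∑ i, oneSidedPower q (μ i) (w i)) := by
  obtain ⟨hq0, hq1⟩ := hq
  refine ⟨?_, ?_, ?_⟩
  · intro i
    rw [hw i]
    constructor
    · have := Phi_pos (μ i / 2 + c / μ i); positivity
    · gcongr
      exact (Phi_lt_one _).le
  · have hsum : ∑ i, w i = (∑ i, Phi (μ i / 2 + c / μ i)) / q := by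
      rw [Finset.sum_div]
      exact Finset.sum_congr rfl (fun i _ => hw i)
    rw [hsum, hc]
    field_simp
  · intro v hv hsum
    calc ∑ i, oneSidedPower q (μ i) (v i)
        ≤ ∑ i, (Phi ((μ i / 2 + c / μ i) - μ i) +
            Real.exp c * (q * v i - Phi (μ i / 2 + c / μ i))) :=
          Finset.sum_le_sum (fun i _ => master hq0 hq1 (hμ i) (hv i))
      _ = ∑ i, Phi ((μ i / 2 + c / μ i) - μ i) := by
          rw [Finset.sum_add_distrib, ← Finset.mul_sum, Finset.sum_sub_distrib,
            ← Finset.mul_sum, hsum, hc]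
          ring
      _ = ∑ i, oneSidedPower q (μ i) (w i) := by
          refine Finset.sum_congr rfl (fun i _ => ?_)
          rw [hw i, power_at_w hq0 (hμ i)]
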